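/- Let X, X₁, X₂ be as in the context and assume additionally that tr X = 0. Writing F̃_j(X) for the coefficient of z^j in det(I + z·X) (so F̃_0(X) = 1 and F̃_1(X) = tr X = 0), one has, for every k with 1 ≤ k ≤ m: trΛ^k(X₂) = Σ_{j=0}^{k} (−1)^{k−j}·trS^{k−j}(X₁)·F̃_j(X). (Intermediate identity established by induction in the proof of Lemma 'block 2'.) -/

import Mathlib

open Polynomial

/-- `trΛ^k(M)`: the coefficient of `z^k` in `det(I + z·M)`. -/
noncomputable def trLambda {N : ℕ} (M : Matrix (Fin N) (Fin N) ℂ) (k : ℕ) : ℂ :=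
  ((1 + (Polynomial.X : ℂ[X]) • M.map Polynomial.C).det).coeff k

/-- `trS^k(M)`: the coefficient of `t^k` in the multiplicative inverse of `det(I − t·M)`
in `ℂ[[t]]`. -/
noncomputable def trS {N : ℕ} (M : Matrix (Fin N) (Fin N) ℂ) (k : ℕ) : ℂ :=
  PowerSeries.coeff k
    ((((1 - (Polynomial.X : ℂ[X]) • M.map Polynomial.C).det : ℂ[X]) : PowerSeries ℂ)⁻¹)

set_option maxRecDepth 8000
set_option maxHeartbeats 1000000

lemma coeff_comp_neg_X (p : ℂ[X]) (n : ℕ) : (p.comp (-X)).coeff n = (-1)^n * p.coeff n := by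
  induction p using Polynomial.induction_on' with
  | add p q hp hq => simp [add_comp, hp, hq, mul_add]
  | monomial i a =>
      have hc : (monomial i a).comp (-X) = C ((-1:ℂ)^i * a) * X^i := by
        rw [monomial_comp, show (-X : ℂ[X]) = C (-1) * X by rw [C_neg, C_1, neg_one_mul],
          mul_pow, ← C_pow]
        rw [← mul_assoc, ← C_mul, mul_comm a]
      rw [hc, coeff_C_mul, coeff_X_pow, coeff_monomial]
      rcases eq_or_ne i n with h | h
      · subst h; simp
      · simp [h, Ne.symm h]

lemma constCoeff_det_one_add {N : ℕ} (M : Matrix (Fin N) (Fin N) ℂ) :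
    ((1 + (X:ℂ[X]) • M.map C).det).coeff 0 = 1 := by
  rw [coeff_zero_eq_eval_zero]
  have h := RingHom.map_det (evalRingHom (0:ℂ)) (1 + (X:ℂ[X]) • M.map C)
  have h2 : (evalRingHom (0:ℂ)).mapMatrix (1 + (X:ℂ[X]) • M.map C) = 1 := by
    ext i j
    simp [Matrix.one_apply, apply_ite]
  rw [show eval 0 ((1 + (X:ℂ[X]) • M.map C).det) = (evalRingHom (0:ℂ)) ((1 + (X:ℂ[X]) • M.map C).det) from rfl, h, h2, Matrix.det_one]

lemma det_one_sub_eq_comp {N : ℕ} (M : Matrix (Fin N) (Fin N) ℂ) :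
    (1 - (X:ℂ[X]) • M.map C).det = ((1 + (X:ℂ[X]) • M.map C).det).comp (-X) := by
  rw [comp_eq_aeval, ← AlgHom.coe_toRingHom, RingHom.map_det]
  congr 1
  ext i j
  simp only [Matrix.map_apply, Matrix.sub_apply, Matrix.add_apply, Matrix.smul_apply,
    Matrix.one_apply, smul_eq_mul, AlgHom.coe_toRingHom, map_add, map_mul, aeval_X]
  rcases eq_or_ne i j with h | h
  · simp [h, aeval_C]; ring
  · simp [h, aeval_C]

lemma trS_eq_inv_coeff {N : ℕ} (M : Matrix (Fin N) (Fin N) ℂ) (i : ℕ) :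
    trS M i = (-1:ℂ)^i *
      (PowerSeries.coeff i ((((1 + (X:ℂ[X]) • M.map C).det : ℂ[X]) : PowerSeries ℂ)⁻¹)) := by
  set P : ℂ[X] := (1 + (X:ℂ[X]) • M.map C).det with hP
  set u : PowerSeries ℂ := (P : PowerSeries ℂ) with hu
  have hc0 : PowerSeries.constantCoeff u = 1 := by
    rw [← PowerSeries.coeff_zero_eq_constantCoeff_apply, hu, Polynomial.coeff_coe, hP,
      constCoeff_det_one_add]
  have hu0 : PowerSeries.constantCoeff u ≠ 0 := by rw [hc0]; exact one_ne_zero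
  have hw : (((1 - (X:ℂ[X]) • M.map C).det : ℂ[X]) : PowerSeries ℂ)
      = PowerSeries.rescale (-1) u := by
    ext nn
    rw [Polynomial.coeff_coe, det_one_sub_eq_comp, coeff_comp_neg_X, PowerSeries.coeff_rescale,
      hu, Polynomial.coeff_coe]
  have hcw : PowerSeries.constantCoeff (PowerSeries.rescale (-1) u) ≠ 0 := by
    rw [← PowerSeries.coeff_zero_eq_constantCoeff_apply, PowerSeries.coeff_rescale, pow_zero,
      one_mul, PowerSeries.coeff_zero_eq_constantCoeff_apply, hc0]
    exact one_ne_zero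
  have hinv : (((1 - (X:ℂ[X]) • M.map C).det : ℂ[X]) : PowerSeries ℂ)⁻¹
      = PowerSeries.rescale (-1) u⁻¹ := by
    rw [hw, eq_comm, PowerSeries.eq_inv_iff_mul_eq_one hcw, ← map_mul,
      PowerSeries.inv_mul_cancel _ hu0, map_one]
  rw [trS, hinv, PowerSeries.coeff_rescale]

lemma combine_coeff (P Q : ℂ[X]) (hP0 : P.coeff 0 = 1) (k : ℕ) :
    Q.coeff k = ∑ j ∈ Finset.range (k+1),
      (-1:ℂ)^(k-j) * ((-1:ℂ)^(k-j) * PowerSeries.coeff (k-j) ((P : PowerSeries ℂ)⁻¹))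
        * (P*Q).coeff j := by
  set u : PowerSeries ℂ := (P : PowerSeries ℂ) with hu
  set q : PowerSeries ℂ := (Q : PowerSeries ℂ) with hq
  have hu0 : PowerSeries.constantCoeff u ≠ 0 := by
    rw [← PowerSeries.coeff_zero_eq_constantCoeff_apply, hu, Polynomial.coeff_coe, hP0]
    exact one_ne_zero
  have hsimp : ∀ j, (-1:ℂ)^(k-j) * ((-1:ℂ)^(k-j) * PowerSeries.coeff (k-j) u⁻¹)
      * (P*Q).coeff j = PowerSeries.coeff (k-j) u⁻¹ * PowerSeries.coeff j (u * q) := by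
    intro j
    rw [← mul_assoc, ← mul_pow, neg_mul_neg, one_mul, one_pow, one_mul,
      ← Polynomial.coeff_coe (P*Q), Polynomial.coe_mul]
  rw [Finset.sum_congr rfl fun j _ => hsimp j]
  have hrefl := Finset.sum_range_reflect
    (fun j => PowerSeries.coeff (k-j) u⁻¹ * PowerSeries.coeff j (u * q)) (k+1)
  simp only [Nat.add_sub_cancel] at hrefl
  have hanti := Finset.Nat.sum_antidiagonal_eq_sum_range_succ
    (fun a b => PowerSeries.coeff a u⁻¹ * PowerSeries.coeff b (u * q)) k
  have hmul : PowerSeries.coeff k (u⁻¹ * (u * q)) =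
      ∑ ij ∈ Finset.HasAntidiagonal.antidiagonal k, PowerSeries.coeff ij.1 u⁻¹ *
        PowerSeries.coeff ij.2 (u * q) := PowerSeries.coeff_mul k _ _
  have hq' : u⁻¹ * (u * q) = q := by
    rw [← mul_assoc, PowerSeries.inv_mul_cancel _ hu0, one_mul]
  have : Q.coeff k = PowerSeries.coeff k (u⁻¹ * (u * q)) := by
    rw [hq', hq, Polynomial.coeff_coe]
  rw [this, hmul, hanti]
  rw [← hrefl]
  apply Finset.sum_congr rfl
  intro j hj
  simp only [Finset.mem_range] at hj
  have : k - (k - j) = j := by omega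
  rw [this]

lemma coeff_det_modify (n m k : ℕ) (hn : 1 ≤ n) (hm : 2 ≤ m) (hk : k ≤ m)
    (Xm : Matrix (Fin (n + m)) (Fin (n + m)) ℂ)
    (h1 : ∀ i j : Fin (n + m), i.val < n → n + 1 ≤ j.val → Xm i j = 0)
    (h3 : ∀ i j : Fin (n + m), n ≤ i.val → n ≤ j.val → i.val + 2 ≤ j.val → Xm i j = 0)
    (Y : Matrix (Fin (n + m)) (Fin (n + m)) ℂ)
    (hY : ∀ r c : Fin (n+m), Y r c = if r.val = n + m - 1 ∧ c.val < n then 0 else Xm r c) :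
    ((1 + (X:ℂ[X]) • Xm.map C).det).coeff k = ((1 + (X:ℂ[X]) • Y.map C).det).coeff k := by
  rw [Matrix.det_apply, Matrix.det_apply, finset_sum_coeff, finset_sum_coeff]
  apply Finset.sum_congr rfl
  intro σ _
  rw [coeff_smul, coeff_smul]
  congr 1
  have inj' : ∀ x y : Fin (n+m), (σ x).val = (σ y).val → x.val = y.val := by
    intro x y h
    exact Fin.ext_iff.mp (σ.injective (Fin.ext h))
  by_cases hex : ∃ i : Fin (n+m), i.val < n ∧ (σ i).val = n + m - 1
  · obtain ⟨i₀, hi₀n, hi₀⟩ := hex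
    have hσi₀ : σ i₀ ≠ i₀ := by
      intro h
      have : (σ i₀).val = i₀.val := congrArg Fin.val h
      omega
    have hYzero : (∏ i, (1 + (X:ℂ[X]) • Y.map C) (σ i) i) = 0 := by
      apply Finset.prod_eq_zero (Finset.mem_univ i₀)
      simp only [Matrix.add_apply, Matrix.smul_apply, Matrix.map_apply, Matrix.one_apply,
        smul_eq_mul]
      rw [if_neg hσi₀, hY, if_pos ⟨hi₀, hi₀n⟩]
      simp
    rw [hYzero, coeff_zero]
    by_cases hz : ∀ i : Fin (n+m), σ i ≠ i → Xm (σ i) i ≠ 0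
    · have key : ∀ d a, 1 ≤ a → a ≤ m - 1 → m - 1 - a = d →
          ∀ j : Fin (n+m), j.val = n + a → (σ j).val = n + a - 1 := by
        intro d
        induction d using Nat.strong_induction_on with
        | _ d IH =>
          intro a ha1 ha2 hd j hjval
          have hjfix : σ j ≠ j := by
            intro h
            have hval : (σ j).val = j.val := congrArg Fin.val h
            rcases eq_or_lt_of_le ha2 with heq | hlt
            · have : (σ j).val = (σ i₀).val := by omega
              have := inj' _ _ this
              omega
            · have hlt2 : n + (a+1) < n + m := by omega
              set j₂ : Fin (n+m) := ⟨n + (a+1), hlt2⟩ with hj₂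
              have hj₂val : j₂.val = n + (a + 1) := rfl
              have hIH := IH (m - 1 - (a+1)) (by omega) (a+1) (by omega) (by omega) rfl j₂ hj₂val
              have h8 := inj' j₂ j (by omega)
              omega
          have hnz := hz j hjfix
          have hge_n : n ≤ (σ j).val := by
            by_contra hlt
            exact hnz (h1 (σ j) j (by omega) (by omega))
          have hge : n + a - 1 ≤ (σ j).val := by
            by_contra hlt
            exact hnz (h3 (σ j) j hge_n (by omega) (by omega))
          have hne : (σ j).val ≠ n + a := by
            intro h
            exact hjfix (Fin.ext (by omega))
          have hnotgt : ¬ (n + a < (σ j).val) := by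
            intro hgt
            have hub : (σ j).val ≤ n + m - 1 := by
              have := (σ j).isLt; omega
            rcases eq_or_lt_of_le hub with hlast | hmid
            · have := inj' j i₀ (by omega)
              omega
            · have ht2 : (σ j).val ≤ n + m - 2 := by omega
              have hlt3 : (σ j).val + 1 < n + m := by omega
              set j₃ : Fin (n+m) := ⟨(σ j).val + 1, hlt3⟩ with hj₃
              have hj₃val : j₃.val = (σ j).val + 1 := rfl
              have hIH := IH (m - 1 - ((σ j).val - n + 1)) (by omega) ((σ j).val - n + 1)
                (by omega) (by omega) rfl j₃ (by omega)
              have h9 := inj' j₃ j (by omega)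
              omega
          omega
      have hbot : ∀ a : Fin m, σ (Fin.natAdd n a) ≠ Fin.natAdd n a := by
        intro a h
        have hval : (σ (Fin.natAdd n a)).val = n + a.val := by
          rw [h]; rfl
        rcases Nat.eq_zero_or_pos a.val with h0 | hpos
        · have hlt4 : n + 1 < n + m := by omega
          set j₄ : Fin (n+m) := ⟨n + 1, hlt4⟩ with hj₄
          have hj₄val : j₄.val = n + 1 := rfl
          have hk1 := key (m - 2) 1 le_rfl (by omega) (by omega) j₄ hj₄val
          have h7 := inj' j₄ (Fin.natAdd n a) (by omega)
          simp only [Fin.coe_natAdd] at h7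
          omega
        · have hk1 := key (m - 1 - a.val) a.val hpos (by omega) rfl (Fin.natAdd n a)
            rfl
          omega
      set S : Finset (Fin (n+m)) :=
        insert i₀ (Finset.image (fun a : Fin m => Fin.natAdd n a) Finset.univ) with hS
      have hcard : S.card = m + 1 := by
        rw [hS, Finset.card_insert_of_notMem, Finset.card_image_of_injective _
          (fun a b hab => by
            have := Fin.ext_iff.mp hab
            simp only [Fin.coe_natAdd] at this
            exact Fin.ext (by omega))]
        · simp
        · intro hmem
          simp only [Finset.mem_image, Finset.mem_univ, true_and] at hmem
          obtain ⟨a, ha⟩ := hmem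
          have := Fin.ext_iff.mp ha
          simp only [Fin.coe_natAdd] at this
          omega
      have hSfix : ∀ i ∈ S, σ i ≠ i := by
        intro i hi
        rcases Finset.mem_insert.mp hi with h | h
        · rw [h]; exact hσi₀
        · simp only [Finset.mem_image, Finset.mem_univ, true_and] at h
          obtain ⟨a, ha⟩ := h
          rw [← ha]; exact hbot a
      have hdvd : (X:ℂ[X])^(m+1) ∣ ∏ i, (1 + (X:ℂ[X]) • Xm.map C) (σ i) i := by
        have hpow : (X:ℂ[X])^(m+1) = ∏ _i ∈ S, (X:ℂ[X]) := by
          rw [Finset.prod_const, hcard]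
        rw [hpow]
        refine dvd_trans ?_
          (Finset.prod_dvd_prod_of_subset S Finset.univ _ (Finset.subset_univ S))
        refine Finset.prod_dvd_prod_of_dvd (fun _ => (X:ℂ[X])) _ ?_
        intro i hi
        simp only [Matrix.add_apply, Matrix.smul_apply, Matrix.map_apply, Matrix.one_apply,
          smul_eq_mul]
        rw [if_neg (hSfix i hi), zero_add]
        exact Dvd.intro _ rfl
      obtain ⟨r, hr⟩ := hdvd
      rw [hr, mul_comm, coeff_mul_X_pow', if_neg (by omega)]
    · push_neg at hz
      obtain ⟨i₁, hi₁, hzz⟩ := hz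
      have hzero : (∏ i, (1 + (X:ℂ[X]) • Xm.map C) (σ i) i) = 0 := by
        apply Finset.prod_eq_zero (Finset.mem_univ i₁)
        simp only [Matrix.add_apply, Matrix.smul_apply, Matrix.map_apply, Matrix.one_apply,
          smul_eq_mul]
        rw [if_neg hi₁, hzz]
        simp
      rw [hzero, coeff_zero]
  · congr 1
    apply Finset.prod_congr rfl
    intro i _
    simp only [Matrix.add_apply, Matrix.smul_apply, Matrix.map_apply]
    rw [hY, if_neg (fun hc => hex ⟨i, hc.2, hc.1⟩)]

lemma det_block_factor (n m : ℕ)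
    (Y : Matrix (Fin (n + m)) (Fin (n + m)) ℂ)
    (hzero : ∀ (a : Fin m) (j : Fin n), Y (Fin.natAdd n a) (Fin.castAdd m j) = 0)
    (X₁ : Matrix (Fin n) (Fin n) ℂ)
    (hX₁ : ∀ i j : Fin n, X₁ i j = Y (Fin.castAdd m i) (Fin.castAdd m j))
    (X₂ : Matrix (Fin m) (Fin m) ℂ)
    (hX₂ : ∀ a b : Fin m, X₂ a b = Y (Fin.natAdd n a) (Fin.natAdd n b)) :
    (1 + (X:ℂ[X]) • Y.map C).det
      = (1 + (X:ℂ[X]) • X₁.map C).det * (1 + (X:ℂ[X]) • X₂.map C).det := by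
  set A : Matrix (Fin (n+m)) (Fin (n+m)) ℂ[X] := 1 + (X:ℂ[X]) • Y.map C with hA
  rw [← Matrix.det_submatrix_equiv_self finSumFinEquiv A]
  set B : Matrix (Fin n ⊕ Fin m) (Fin n ⊕ Fin m) ℂ[X] :=
    A.submatrix finSumFinEquiv finSumFinEquiv with hB
  have hblocks : B = Matrix.fromBlocks (1 + (X:ℂ[X]) • X₁.map C)
      (Matrix.of fun i a => B (Sum.inl i) (Sum.inr a)) 0 (1 + (X:ℂ[X]) • X₂.map C) := by
    refine Matrix.ext fun i j => ?_
    rcases i with i | a <;> rcases j with j | b <;>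
      simp only [hB, Matrix.submatrix_apply, finSumFinEquiv_apply_left,
        finSumFinEquiv_apply_right, Matrix.fromBlocks_apply₁₁, Matrix.fromBlocks_apply₁₂,
        Matrix.fromBlocks_apply₂₁, Matrix.fromBlocks_apply₂₂, hA, Matrix.add_apply,
        Matrix.smul_apply, Matrix.map_apply, Matrix.one_apply, smul_eq_mul, Matrix.zero_apply, Matrix.of_apply]
    · rw [hX₁ i j]
      congr 1
      by_cases h : i = j
      · rw [if_pos (by rw [h]), if_pos h]
      · rw [if_neg (fun hc => h (Fin.castAdd_injective _ _ hc)), if_neg h]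
    · rw [hzero a j, if_neg (fun hc => by
        have := congrArg Fin.val hc
        simp only [Fin.coe_natAdd, Fin.coe_castAdd] at this
        omega)]
      simp
    · rw [hX₂ a b]
      congr 1
      by_cases h : a = b
      · rw [if_pos (by rw [h]), if_pos h]
      · rw [if_neg (fun hc => h (by
          have := congrArg Fin.val hc
          simp only [Fin.coe_natAdd] at this
          exact Fin.ext (by omega))), if_neg h]
  rw [hblocks, Matrix.det_fromBlocks_zero₂₁]

theorem block2_induction_step (n m : ℕ) (hn : 1 ≤ n) (hm : 2 ≤ m)
    (Xm : Matrix (Fin (n + m)) (Fin (n + m)) ℂ)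
    (h1 : ∀ i j : Fin (n + m), i.val < n → n + 1 ≤ j.val → Xm i j = 0)
    (h2 : ∀ i j : Fin (n + m), n ≤ i.val → i.val < n + m - 1 → j.val < n → Xm i j = 0)
    (h3 : ∀ i j : Fin (n + m), n ≤ i.val → n ≤ j.val → i.val + 2 ≤ j.val → Xm i j = 0)
    (h4 : ∀ i j : Fin (n + m), n ≤ i.val → j.val = i.val + 1 → Xm i j = 1)
    (htr : Xm.trace = 0)
    (X₁ : Matrix (Fin n) (Fin n) ℂ)
    (hX₁ : ∀ i j : Fin n, X₁ i j = Xm (Fin.castLE (by omega) i) (Fin.castLE (by omega) j))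
    (X₂ : Matrix (Fin m) (Fin m) ℂ)
    (hX₂ : ∀ a b : Fin m, X₂ a b = Xm (Fin.natAdd n a) (Fin.natAdd n b)) :
    ∀ k : ℕ, 1 ≤ k → k ≤ m →
      trLambda X₂ k =
        ∑ j ∈ Finset.range (k + 1), (-1 : ℂ) ^ (k - j) * trS X₁ (k - j) * trLambda Xm j := by
  intro k hk1 hk2
  set Y : Matrix (Fin (n+m)) (Fin (n+m)) ℂ :=
    Matrix.of (fun r c => if r.val = n + m - 1 ∧ c.val < n then 0 else Xm r c) with hYdef
  have hY : ∀ r c : Fin (n+m), Y r c = if r.val = n + m - 1 ∧ c.val < n then 0 else Xm r c :=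
    fun r c => rfl
  have hzero : ∀ (a : Fin m) (j : Fin n), Y (Fin.natAdd n a) (Fin.castAdd m j) = 0 := by
    intro a j
    rw [hY]
    by_cases h : (Fin.natAdd n a).val = n + m - 1
    · rw [if_pos ⟨h, j.isLt⟩]
    · rw [if_neg (fun hc => h hc.1)]
      refine h2 _ _ (by simp) ?_ (j.isLt)
      have := (Fin.natAdd n a).isLt
      simp only [Fin.coe_natAdd] at h ⊢
      omega
  have hX₁' : ∀ i j : Fin n, X₁ i j = Y (Fin.castAdd m i) (Fin.castAdd m j) := by
    intro i j
    rw [hY, if_neg (fun hc => by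
      have h1 := hc.1
      simp only [Fin.coe_castAdd] at h1
      have := i.isLt
      omega)]
    rw [hX₁ i j]
    congr 1 <;> exact Fin.ext rfl
  have hX₂' : ∀ a b : Fin m, X₂ a b = Y (Fin.natAdd n a) (Fin.natAdd n b) := by
    intro a b
    rw [hY, if_neg (fun hc => by
      have h2' := hc.2
      simp only [Fin.coe_natAdd] at h2'
      omega)]
    exact hX₂ a b
  have ha : (1 + (X:ℂ[X]) • Y.map C).det
      = (1 + (X:ℂ[X]) • X₁.map C).det * (1 + (X:ℂ[X]) • X₂.map C).det :=
    det_block_factor n m Y hzero X₁ hX₁' X₂ hX₂'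
  have hb : ∀ j, j ≤ m → ((1 + (X:ℂ[X]) • Xm.map C).det).coeff j
      = ((1 + (X:ℂ[X]) • Y.map C).det).coeff j := by
    intro j hj
    exact coeff_det_modify n m j hn hm hj Xm h1 h3 Y hY
  have hP0 : ((1 + (X:ℂ[X]) • X₁.map C).det).coeff 0 = 1 := constCoeff_det_one_add X₁
  show ((1 + (X:ℂ[X]) • X₂.map C).det).coeff k = _
  rw [combine_coeff ((1 + (X:ℂ[X]) • X₁.map C).det) ((1 + (X:ℂ[X]) • X₂.map C).det) hP0 k]
  apply Finset.sum_congr rfl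
  intro j hj
  simp only [Finset.mem_range] at hj
  rw [trS_eq_inv_coeff, trLambda, hb j (by omega), ha]
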